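/- Let q be a prime power, F = 𝔽_q, s ≥ 1, and n_1, …, n_s ≥ 1. Call a matrix A ∈ M_{r×r}(F) a unit lower triangular Toeplitz matrix if there exists c : {0,…,r−1} → F with c(0) ≠ 0 such that A_{a,b} = c(a−b) for a ≥ b and A_{a,b} = 0 for a < b. For v = (v_1, …, v_s) ∈ ∏_{i=1}^s F^{n_i}, let wt_blk(v) := #{ i : v_i ≠ 0 } and let wt_H(v) be its Hamming weight as a vector of length M = n_1 + ⋯ + n_s. Then for every linear subspace W ⊆ ∏_{i=1}^s F^{n_i} containing a nonzero vector, there exist unit lower triangular Toeplitz matrices S_i ∈ M_{n_i×n_i}(F), i = 1,…,s, such that the subspace W' := { (v_1 S_1, …, v_s S_s) : (v_1,…,v_s) ∈ W } (each v_i regarded as a row vector) satisfies: the minimum Hamming weight over nonzero elements of W' equals the minimum block weight d_blk(W) over nonzero elements of W. -/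
import Mathlib


/-- Block weight of `v ∈ ∏_i F^{n_i}`: the number of blocks `i` with `v i ≠ 0`. -/
noncomputable def wtBlk {F : Type*} [Field F] {s : ℕ} {n : Fin s → ℕ}
    (v : ∀ i, Fin (n i) → F) : ℕ :=
  Nat.card {i : Fin s // v i ≠ 0}

/-- Hamming weight of `v ∈ ∏_i F^{n_i}` viewed as a vector of length `M = Σ n_i`:
the total number of nonzero scalar coordinates. -/
noncomputable def wtHam {F : Type*} [Field F] {s : ℕ} {n : Fin s → ℕ}
    (v : ∀ i, Fin (n i) → F) : ℕ :=
  ∑ i : Fin s, Nat.card {j : Fin (n i) // v i j ≠ 0}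

/-- A matrix `A ∈ M_{r×r}(F)` is a unit lower triangular Toeplitz matrix if there is
`c` with `c 0 ≠ 0` such that `A a b = c (a−b)` for `a ≥ b` and `A a b = 0` for `a < b`. -/
def IsUnitLTToeplitz {F : Type*} [Field F] {r : ℕ}
    (A : Matrix (Fin r) (Fin r) F) : Prop :=
  ∃ c : ℕ → F, c 0 ≠ 0 ∧
    ∀ a b : Fin r, A a b = if (b : ℕ) ≤ (a : ℕ) then c ((a : ℕ) - (b : ℕ)) else 0

section Aux

variable {F : Type*} [Field F]

/-- Auxiliary recursively defined sequence of Toeplitz coefficients. -/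
noncomputable def cSeq (u : ℕ → F) (m : ℕ) : ℕ → F
  | 0 => 1
  | (k+1) => -(u m)⁻¹ * ∑ j ∈ (Finset.range (k+1)).attach,
      (if k+1 ≤ m + (j:ℕ) then u (m + (j:ℕ) - (k+1)) else 0) * cSeq u m j
  decreasing_by exact List.mem_range.mp j.2

lemma cSeq_succ (u : ℕ → F) (m k : ℕ) :
    cSeq u m (k+1) = -(u m)⁻¹ * ∑ j ∈ Finset.range (k+1),
      (if k+1 ≤ m + j then u (m + j - (k+1)) else 0) * cSeq u m j := by
  rw [cSeq, ← Finset.sum_attach (Finset.range (k+1))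
    (fun j => (if k+1 ≤ m + j then u (m + j - (k+1)) else 0) * cSeq u m j)]

lemma cSeq_key (u : ℕ → F) (m : ℕ) (hm : u m ≠ 0) (k : ℕ) (hk1 : 1 ≤ k) (hk2 : k ≤ m) :
    ∑ j ∈ Finset.range (k+1), u (m - k + j) * cSeq u m j = 0 := by
  obtain ⟨k, rfl⟩ : ∃ k', k = k' + 1 := ⟨k-1, by omega⟩
  rw [Finset.sum_range_succ]
  have h1 : ∀ j ∈ Finset.range (k+1),
      u (m - (k+1) + j) * cSeq u m j
        = (if k+1 ≤ m + j then u (m + j - (k+1)) else 0) * cSeq u m j := by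
    intro j hj
    have hle : k + 1 ≤ m + j := by omega
    rw [if_pos hle]
    congr 2
    omega
  rw [Finset.sum_congr rfl h1, show m - (k+1) + (k+1) = m from by omega, cSeq_succ]
  field_simp
  ring

/-- For any nonzero row vector `u` there is a unit lower triangular Toeplitz matrix `S`
such that `u S` has exactly one nonzero coordinate (at the top nonzero index of `u`). -/
lemma exists_toeplitz_single {r : ℕ} (u : Fin r → F) (hu : u ≠ 0) :
    ∃ S : Matrix (Fin r) (Fin r) F, IsUnitLTToeplitz S ∧
      ∃ m : Fin r, u m ≠ 0 ∧ ∀ b, Matrix.vecMul u S b = if b = m then u m else 0 := by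
  classical
  have hne : (Finset.univ.filter fun a => u a ≠ 0).Nonempty := by
    rcases Function.ne_iff.mp hu with ⟨a, ha⟩
    exact ⟨a, by simpa using ha⟩
  set M := Finset.univ.filter fun a => u a ≠ 0 with hM
  set m : Fin r := M.max' hne with hmdef
  have hum : u m ≠ 0 := by have := M.max'_mem hne; simpa [hM] using this
  have hmax : ∀ a : Fin r, (m:ℕ) < (a:ℕ) → u a = 0 := by
    intro a ha
    by_contra h
    have haM : a ∈ M := by simp [hM, h]
    have := Finset.le_max' M a haM
    rw [Fin.le_def] at this
    omega
  set u' : ℕ → F := fun t => if h : t < r then u ⟨t, h⟩ else 0 with hu'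
  have hu'eq : ∀ a : Fin r, u' (a:ℕ) = u a := by
    intro a; simp [hu', a.isLt]
  have hsupp : ∀ t, (m:ℕ) < t → u' t = 0 := by
    intro t ht
    by_cases h : t < r
    · simpa [hu', h] using hmax ⟨t, h⟩ ht
    · simp [hu', h]
  set c := cSeq u' (m : ℕ) with hc
  have hc0 : c 0 = 1 := by rw [hc, cSeq]
  set A : Matrix (Fin r) (Fin r) F :=
    Matrix.of fun a b => if (b:ℕ) ≤ (a:ℕ) then c ((a:ℕ) - (b:ℕ)) else 0 with hA
  refine ⟨A, ⟨c, by rw [hc0]; exact one_ne_zero, fun a b => rfl⟩, m, hum, ?_⟩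
  intro b
  have hvm : Matrix.vecMul u A b = ∑ a : Fin r, u a * A a b := by
    simp [Matrix.vecMul, dotProduct]
  rw [hvm]
  simp only [hA, Matrix.of_apply]
  rcases lt_trichotomy (b:ℕ) (m:ℕ) with hbm | hbm | hbm
  · -- b < m : hard case
    rw [if_neg (by intro h; rw [h] at hbm; omega)]
    have hstep : ∀ a : Fin r, u a * (if (b:ℕ) ≤ (a:ℕ) then c ((a:ℕ) - (b:ℕ)) else 0)
        = u' (a:ℕ) * (if (b:ℕ) ≤ (a:ℕ) then c ((a:ℕ) - (b:ℕ)) else 0) := by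
      intro a; rw [hu'eq]
    rw [Finset.sum_congr rfl (fun a _ => hstep a),
      Fin.sum_univ_eq_sum_range (fun t => u' t * (if (b:ℕ) ≤ t then c (t - (b:ℕ)) else 0)) r]
    have hsub : Finset.Icc (b:ℕ) (m:ℕ) ⊆ Finset.range r := by
      intro t ht
      simp only [Finset.mem_Icc] at ht
      simp only [Finset.mem_range]
      exact lt_of_le_of_lt ht.2 m.isLt
    rw [← Finset.sum_subset hsub]
    · have : ∀ t ∈ Finset.Icc (b:ℕ) (m:ℕ),
          u' t * (if (b:ℕ) ≤ t then c (t - (b:ℕ)) else 0) = u' t * c (t - (b:ℕ)) := by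
        intro t ht
        simp only [Finset.mem_Icc] at ht
        rw [if_pos ht.1]
      rw [Finset.sum_congr rfl this, ← Finset.Ico_add_one_right_eq_Icc, Finset.sum_Ico_eq_sum_range]
      have hk1 : 1 ≤ (m:ℕ) - (b:ℕ) := by omega
      have hrange : (m:ℕ) + 1 - (b:ℕ) = ((m:ℕ) - (b:ℕ)) + 1 := by omega
      rw [hrange]
      have := cSeq_key u' (m:ℕ) (by rw [hu'eq]; exact hum) ((m:ℕ) - (b:ℕ)) hk1 (by omega)
      have hbb : (m:ℕ) - ((m:ℕ) - (b:ℕ)) = (b:ℕ) := by omega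
      rw [hbb] at this
      simpa [hc] using this
    · intro t htr htn
      simp only [Finset.mem_Icc, not_and_or, not_le] at htn
      rcases htn with h | h
      · rw [if_neg (by omega), mul_zero]
      · rw [hsupp t h, zero_mul]
  · -- b = m
    have hbm' : b = m := Fin.ext hbm
    rw [if_pos hbm', hbm']
    rw [Finset.sum_eq_single m]
    · rw [if_pos (le_refl _), Nat.sub_self, hc0, mul_one]
    · intro a _ ha
      rcases lt_or_gt_of_ne (fun h : (a:ℕ) = (m:ℕ) => ha (Fin.ext h)) with h | h
      · rw [if_neg (by omega), mul_zero]
      · rw [hmax a h, zero_mul]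
    · intro h; exact absurd (Finset.mem_univ m) h
  · -- m < b
    rw [if_neg (by intro h; rw [h] at hbm; omega)]
    apply Finset.sum_eq_zero
    intro a _
    by_cases h : (b:ℕ) ≤ (a:ℕ)
    · rw [hmax a (by omega), zero_mul]
    · rw [if_neg h, mul_zero]

/-- Multiplication by a unit lower triangular Toeplitz matrix preserves nonzeroness. -/
lemma vecMul_toeplitz_ne_zero {r : ℕ} {S : Matrix (Fin r) (Fin r) F}
    (hS : IsUnitLTToeplitz S) {u : Fin r → F} (hu : u ≠ 0) : Matrix.vecMul u S ≠ 0 := by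
  classical
  obtain ⟨c, hc0, hcS⟩ := hS
  have hne : (Finset.univ.filter fun a => u a ≠ 0).Nonempty := by
    rcases Function.ne_iff.mp hu with ⟨a, ha⟩
    exact ⟨a, by simpa using ha⟩
  set M := Finset.univ.filter fun a => u a ≠ 0 with hM
  set m : Fin r := M.max' hne with hmdef
  have hum : u m ≠ 0 := by have := M.max'_mem hne; simpa [hM] using this
  have hmax : ∀ a : Fin r, (m:ℕ) < (a:ℕ) → u a = 0 := by
    intro a ha
    by_contra h
    have haM : a ∈ M := by simp [hM, h]
    have := Finset.le_max' M a haM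
    rw [Fin.le_def] at this
    omega
  have hval : Matrix.vecMul u S m = u m * c 0 := by
    have hvm : Matrix.vecMul u S m = ∑ a : Fin r, u a * S a m := by
      simp [Matrix.vecMul, dotProduct]
    rw [hvm, Finset.sum_eq_single m]
    · rw [hcS m m, if_pos (le_refl _), Nat.sub_self]
    · intro a _ ha
      rcases lt_or_gt_of_ne (fun h : (a:ℕ) = (m:ℕ) => ha (Fin.ext h)) with h | h
      · rw [hcS a m, if_neg (by omega), mul_zero]
      · rw [hmax a h, zero_mul]
    · intro h; exact absurd (Finset.mem_univ m) h
  intro h0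
  have := congrFun h0 m
  rw [hval] at this
  exact mul_ne_zero hum hc0 (by simpa using this)

/-- The identity matrix is a unit lower triangular Toeplitz matrix. -/
lemma isUnitLTToeplitz_one {r : ℕ} : IsUnitLTToeplitz (1 : Matrix (Fin r) (Fin r) F) := by
  refine ⟨fun k => if k = 0 then 1 else 0, by simp, fun a b => ?_⟩
  rw [Matrix.one_apply]
  by_cases h : a = b
  · subst h; simp
  · have hab : (a:ℕ) ≠ (b:ℕ) := fun hh => h (Fin.ext hh)
    rw [if_neg h]
    by_cases h2 : (b:ℕ) ≤ (a:ℕ)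
    · rw [if_pos h2]
      show (0:F) = if (a:ℕ) - (b:ℕ) = 0 then (1:F) else 0
      rw [if_neg (by omega)]
    · rw [if_neg h2]

lemma wtBlk_le_wtHam {F : Type*} [Field F] {s : ℕ} {n : Fin s → ℕ}
    (v : ∀ i, Fin (n i) → F) : wtBlk v ≤ wtHam v := by
  classical
  rw [wtBlk, wtHam, Nat.card_eq_fintype_card, Fintype.card_subtype, Finset.card_filter]
  refine Finset.sum_le_sum fun i _ => ?_
  by_cases h : v i = 0
  · simp [h]
  · rw [if_pos h]
    have : Nonempty {j : Fin (n i) // v i j ≠ 0} := by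
      rcases Function.ne_iff.mp h with ⟨j, hj⟩
      exact ⟨⟨j, by simpa using hj⟩⟩
    exact Nat.one_le_iff_ne_zero.mpr (Nat.card_ne_zero.mpr ⟨this, inferInstance⟩)

end Aux

/-- For every linear subspace `W ⊆ ∏_i F^{n_i}` containing a nonzero
vector, there exist unit lower triangular Toeplitz matrices `S_i ∈ M_{n_i×n_i}(F)` such
that the image `W' = { (v_1 S_1, …, v_s S_s) : v ∈ W }` has minimum Hamming weight (over
nonzero elements) equal to the minimum block weight `d_blk(W)` of `W`. -/
theorem exists_toeplitz_achieving_block_distance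
    {F : Type*} [Field F] [Fintype F]
    {s : ℕ} (hs : 1 ≤ s) (n : Fin s → ℕ) (hn : ∀ i, 1 ≤ n i)
    (W : Submodule F (∀ i, Fin (n i) → F)) (hW : ∃ v ∈ W, v ≠ 0) :
    ∃ S : ∀ i, Matrix (Fin (n i)) (Fin (n i)) F,
      (∀ i, IsUnitLTToeplitz (S i)) ∧
      sInf {w : ℕ | ∃ v ∈ W.map
            (LinearMap.pi fun i => (Matrix.vecMulLinear (S i)).comp (LinearMap.proj i)),
          v ≠ 0 ∧ wtHam v = w}
        = sInf {w : ℕ | ∃ v ∈ W, v ≠ 0 ∧ wtBlk v = w} := by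
  classical
  set Bset : Set ℕ := {w : ℕ | ∃ v ∈ W, v ≠ 0 ∧ wtBlk v = w} with hBset
  have hBne : Bset.Nonempty := by
    obtain ⟨v, hvW, hv0⟩ := hW
    exact ⟨wtBlk v, v, hvW, hv0, rfl⟩
  obtain ⟨v, hvW, hv0, hvd⟩ := Nat.sInf_mem hBne
  -- choose the Toeplitz matrices
  have hex : ∀ i, ∃ S : Matrix (Fin (n i)) (Fin (n i)) F, IsUnitLTToeplitz S ∧
      (v i ≠ 0 → ∃ m : Fin (n i), v i m ≠ 0 ∧
        ∀ b, Matrix.vecMul (v i) S b = if b = m then v i m else 0) := by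
    intro i
    by_cases h : v i = 0
    · exact ⟨1, isUnitLTToeplitz_one, fun h' => absurd h h'⟩
    · obtain ⟨S, hS, m, hm, hvec⟩ := exists_toeplitz_single (v i) h
      exact ⟨S, hS, fun _ => ⟨m, hm, hvec⟩⟩
  choose S hS1 hS2 using hex
  refine ⟨S, hS1, ?_⟩
  set T : (∀ i, Fin (n i) → F) →ₗ[F] (∀ i, Fin (n i) → F) :=
    LinearMap.pi fun i => (Matrix.vecMulLinear (S i)).comp (LinearMap.proj i) with hT
  have hTapp : ∀ u i, T u i = Matrix.vecMul (u i) (S i) := by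
    intro u i
    simp [hT, Matrix.vecMulLinear]
  -- the image of a nonzero vector is nonzero, blockwise
  have hTblk : ∀ u : ∀ i, Fin (n i) → F, ∀ i, u i ≠ 0 → T u i ≠ 0 := by
    intro u i hi
    rw [hTapp]
    exact vecMul_toeplitz_ne_zero (hS1 i) hi
  have hTne : ∀ u : ∀ i, Fin (n i) → F, u ≠ 0 → T u ≠ 0 := by
    intro u hu h0
    rcases Function.ne_iff.mp hu with ⟨i, hi⟩
    exact hTblk u i (by simpa using hi) (by rw [h0]; rfl)
  have hTwtBlk : ∀ u : ∀ i, Fin (n i) → F, wtBlk u ≤ wtBlk (T u) := by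
    intro u
    rw [wtBlk, wtBlk, Nat.card_eq_fintype_card, Nat.card_eq_fintype_card,
      Fintype.card_subtype, Fintype.card_subtype]
    apply Finset.card_le_card
    intro i hi
    simp only [Finset.mem_filter, Finset.mem_univ, true_and] at hi ⊢
    exact hTblk u i hi
  -- the Hamming weight of T v is the block weight of v
  have hTvblocks : ∀ i, Nat.card {j : Fin (n i) // T v i j ≠ 0}
      = if v i ≠ 0 then 1 else 0 := by
    intro i
    by_cases h : v i = 0
    · rw [if_neg (by simpa using h)]
      have : T v i = 0 := by rw [hTapp, h]; simp
      simp [this]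
    · rw [if_pos h]
      obtain ⟨m, hm, hvec⟩ := hS2 i h
      have hiff : ∀ j, T v i j ≠ 0 ↔ j = m := by
        intro j
        rw [hTapp, hvec j]
        by_cases hj : j = m
        · simpa [hj] using hm
        · simp [hj]
      rw [Nat.card_eq_fintype_card, Fintype.card_subtype]
      have : Finset.univ.filter (fun j => T v i j ≠ 0) = {m} := by
        ext j
        simp [hiff j]
      rw [this, Finset.card_singleton]
  have hTvham : wtHam (T v) = wtBlk v := by
    rw [wtHam, wtBlk, Nat.card_eq_fintype_card, Fintype.card_subtype, Finset.card_filter]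
    exact Finset.sum_congr rfl fun i _ => hTvblocks i
  set Hset : Set ℕ := {w : ℕ | ∃ u ∈ W.map T, u ≠ 0 ∧ wtHam u = w} with hHset
  have hmemTv : T v ∈ W.map T := Submodule.mem_map_of_mem hvW
  have hHmem : wtHam (T v) ∈ Hset := ⟨T v, hmemTv, hTne v hv0, rfl⟩
  show sInf Hset = sInf Bset
  apply le_antisymm
  · calc sInf Hset ≤ wtHam (T v) := Nat.sInf_le hHmem
      _ = wtBlk v := hTvham
      _ = sInf Bset := hvd
  · apply le_csInf ⟨_, hHmem⟩
    rintro w ⟨u', hu'mem, hu'0, rfl⟩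
    obtain ⟨u, huW, rfl⟩ := Submodule.mem_map.mp hu'mem
    have hu0 : u ≠ 0 := by
      rintro rfl
      exact hu'0 (map_zero T)
    calc sInf Bset ≤ wtBlk u := Nat.sInf_le ⟨u, huW, hu0, rfl⟩
      _ ≤ wtBlk (T u) := hTwtBlk u
      _ ≤ wtHam (T u) := wtBlk_le_wtHam (T u)
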